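/- Under the stated setup, fix λ ∈ ℝ^n with Z_λ finite and assume for each i = 1,…,n there exists x ∈ X with ν_i(x) > 0. Then γ ↦ A(γ, λ) is strictly concave on ℝ^n, and a point γ̂ ∈ ℝ^n is a global maximizer of A(·, λ) if and only if it satisfies, for each i = 1,…,n, the stationarity equations ∑_{y∈𝒴} k_λ[ν_i] = ∑_{y∈𝒴} p_λ[ν_i e^{γ̂_i ν_#}]; moreover such a maximizer, if it exists, is unique. -/

import Mathlib

/- Common setup: log-linear models over proof trees (complete data X) and
   queries (incomplete data Y). -/

variable {X Y : Type*}

/-- `ν_#(x) = ∑ i, ν_i(x)`. -/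
def nuSharp {n : ℕ} (ν : Fin n → X → ℕ) (x : X) : ℕ := ∑ i, ν i x

/-- weighted property sum `λ·ν(x)`. -/
noncomputable def wdot {n : ℕ} (l : Fin n → ℝ) (ν : Fin n → X → ℕ) (x : X) : ℝ :=
  ∑ i, l i * (ν i x : ℝ)

/-- normalizing constant `Z_λ`. -/
noncomputable def Zpart (p0 : X → ℝ) {n : ℕ} (ν : Fin n → X → ℕ) (l : Fin n → ℝ) : ℝ :=
  ∑' x : X, Real.exp (wdot l ν x) * p0 x

/-- log-linear distribution `p_λ(x)`. -/
noncomputable def pLL (p0 : X → ℝ) {n : ℕ} (ν : Fin n → X → ℕ) (l : Fin n → ℝ) (x : X) : ℝ :=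
  (Zpart p0 ν l)⁻¹ * Real.exp (wdot l ν x) * p0 x

/-- incomplete-data probability `p_λ(y) = ∑_{x ∈ X(y)} p_λ(x)`. -/
noncomputable def pLLY (Yf : X → Y) (p0 : X → ℝ) {n : ℕ} (ν : Fin n → X → ℕ)
    (l : Fin n → ℝ) (y : Y) : ℝ :=
  ∑' x : {x : X // Yf x = y}, pLL p0 ν l x.1

/-- incomplete-data log-likelihood `L(λ) = ∑_{y ∈ 𝒴} ln p_λ(y)`. -/
noncomputable def LL (Yf : X → Y) (p0 : X → ℝ) {n : ℕ} (ν : Fin n → X → ℕ)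
    (𝒴 : Multiset Y) (h𝒴 : 𝒴 ≠ 0) (l : Fin n → ℝ) : ℝ :=
  (𝒴.map fun y => Real.log (pLLY Yf p0 ν l y)).sum

/-- expectation `p_λ[f]`. -/
noncomputable def pExp (p0 : X → ℝ) {n : ℕ} (ν : Fin n → X → ℕ) (l : Fin n → ℝ)
    (f : X → ℝ) : ℝ :=
  ∑' x : X, pLL p0 ν l x * f x

/-- conditional expectation `k_λ[f]` given observed `y`. -/
noncomputable def kExp (Yf : X → Y) (p0 : X → ℝ) {n : ℕ} (ν : Fin n → X → ℕ)
    (l : Fin n → ℝ) (y : Y) (f : X → ℝ) : ℝ :=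
  ∑' x : {x : X // Yf x = y}, (pLL p0 ν l x.1 / pLLY Yf p0 ν l y) * f x.1

/-- auxiliary function
`A(γ,λ) = ∑_{y∈𝒴} (1 + k_λ[γ·ν] − p_λ[∑ i, ν̄_i e^{γ_i ν_#}])`. -/
noncomputable def Aaux (Yf : X → Y) (p0 : X → ℝ) {n : ℕ} (ν : Fin n → X → ℕ)
    (𝒴 : Multiset Y) (γ l : Fin n → ℝ) : ℝ :=
  (𝒴.map fun y =>
    1 + kExp Yf p0 ν l y (fun x => wdot γ ν x)
      - pExp p0 ν l (fun x =>
          ∑ i, ((ν i x : ℝ) / (nuSharp ν x : ℝ)) * Real.exp (γ i * (nuSharp ν x : ℝ)))).sum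


private lemma msum_fsum {α β : Type*} (s : Multiset α) (t : Finset β) (f : β → α → ℝ) :
    (s.map fun y => ∑ i ∈ t, f i y).sum = ∑ i ∈ t, (s.map (f i)).sum := by
  induction s using Multiset.induction_on with
  | empty => simp
  | cons a s ih => simp [ih, Finset.sum_add_distrib]

/-- `A(·,λ)` is strictly concave; `γ̂` is a global maximizer iff the
stationarity equations `∑_y k_λ[ν_i] = ∑_y p_λ[ν_i e^{γ̂_i ν_#}]` hold, and the
maximizer (if it exists) is unique. -/
theorem auxiliary_strictly_concave_and_stationarity
    {X Y : Type*} [Countable X] (Yf : X → Y)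
    (p0 : X → ℝ) (hp0 : ∀ x, 0 < p0 x) (hp0sum : ∑' x : X, p0 x = 1)
    {n : ℕ} (ν : Fin n → X → ℕ) (hν : ∀ x, 1 ≤ nuSharp ν x)
    (hνpos : ∀ i : Fin n, ∃ x : X, 0 < ν i x)
    (𝒴 : Multiset Y) (h𝒴 : 𝒴 ≠ 0) (l : Fin n → ℝ)
    (hZl : Summable fun x : X => Real.exp (wdot l ν x) * p0 x)
    (hpos : ∀ y ∈ 𝒴, 0 < pLLY Yf p0 ν l y)
    (hksum : ∀ γ : Fin n → ℝ, ∀ y ∈ 𝒴, Summable fun x : {x : X // Yf x = y} =>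
      (pLL p0 ν l x.1 / pLLY Yf p0 ν l y) * wdot γ ν x.1)
    (hkisum : ∀ i : Fin n, ∀ y ∈ 𝒴, Summable fun x : {x : X // Yf x = y} =>
      (pLL p0 ν l x.1 / pLLY Yf p0 ν l y) * (ν i x.1 : ℝ))
    (hpsum : ∀ γ : Fin n → ℝ, Summable fun x : X => pLL p0 ν l x *
      ∑ i, ((ν i x : ℝ) / (nuSharp ν x : ℝ)) * Real.exp (γ i * (nuSharp ν x : ℝ)))
    (hpisum : ∀ (γ : Fin n → ℝ) (i : Fin n), Summable fun x : X =>
      pLL p0 ν l x * ((ν i x : ℝ) * Real.exp (γ i * (nuSharp ν x : ℝ))))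
    (hpd : ∀ (γ : Fin n → ℝ) (i : Fin n),
      HasDerivAt (fun t : ℝ => pExp p0 ν l
          (fun x => ((ν i x : ℝ) / (nuSharp ν x : ℝ)) * Real.exp (t * (nuSharp ν x : ℝ))))
        (pExp p0 ν l (fun x => (ν i x : ℝ) * Real.exp (γ i * (nuSharp ν x : ℝ))))
        (γ i)) :
    StrictConcaveOn ℝ (Set.univ : Set (Fin n → ℝ)) (fun γ => Aaux Yf p0 ν 𝒴 γ l) ∧
    (∀ γh : Fin n → ℝ,
      (∀ γ : Fin n → ℝ, Aaux Yf p0 ν 𝒴 γ l ≤ Aaux Yf p0 ν 𝒴 γh l) ↔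
      (∀ i : Fin n,
        (𝒴.map fun y => kExp Yf p0 ν l y (fun x => (ν i x : ℝ))).sum =
        (𝒴.map fun _ => pExp p0 ν l
          (fun x => (ν i x : ℝ) * Real.exp (γh i * (nuSharp ν x : ℝ)))).sum)) ∧
    (∀ γ₁ γ₂ : Fin n → ℝ,
      (∀ γ : Fin n → ℝ, Aaux Yf p0 ν 𝒴 γ l ≤ Aaux Yf p0 ν 𝒴 γ₁ l) →
      (∀ γ : Fin n → ℝ, Aaux Yf p0 ν 𝒴 γ l ≤ Aaux Yf p0 ν 𝒴 γ₂ l) →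
      γ₁ = γ₂) := by
    classical
  have hmpos : (0:ℝ) < (Multiset.card 𝒴 : ℝ) := by
    exact_mod_cast Multiset.card_pos.mpr h𝒴
  set m : ℝ := (Multiset.card 𝒴 : ℝ) with hm
  have hpLLnn : ∀ x, 0 ≤ pLL p0 ν l x := by
    intro x
    have hZ : 0 ≤ Zpart p0 ν l :=
      tsum_nonneg fun x => le_of_lt (mul_pos (Real.exp_pos _) (hp0 x))
    exact mul_nonneg (mul_nonneg (inv_nonneg.mpr hZ) (Real.exp_pos _).le) (hp0 x).le
  have hpLLpos : ∀ x : X, 0 < pLL p0 ν l x := by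
    intro x
    have hZpos : 0 < Zpart p0 ν l :=
      Summable.tsum_pos hZl (fun x => le_of_lt (mul_pos (Real.exp_pos _) (hp0 x))) x
        (mul_pos (Real.exp_pos _) (hp0 x))
    exact mul_pos (mul_pos (inv_pos.mpr hZpos) (Real.exp_pos _)) (hp0 x)
  set K : Fin n → ℝ := fun i => (𝒴.map fun y => kExp Yf p0 ν l y fun x => (ν i x : ℝ)).sum
    with hK
  set φ : Fin n → ℝ → ℝ := fun i t =>
    pExp p0 ν l fun x => (ν i x : ℝ) * Real.exp (t * (nuSharp ν x : ℝ)) with hφ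
  set ψ : Fin n → ℝ → ℝ := fun i t =>
    pExp p0 ν l fun x => ((ν i x : ℝ) / (nuSharp ν x : ℝ)) * Real.exp (t * (nuSharp ν x : ℝ))
    with hψ
  set g : Fin n → ℝ → ℝ := fun i t => K i * t - m * ψ i t with hg
  have hψd : ∀ (i : Fin n) (t : ℝ), HasDerivAt (ψ i) (φ i t) t := by
    intro i t
    simp only [hψ, hφ]
    exact hpd (fun _ => t) i
  have hφmono : ∀ i : Fin n, StrictMono (φ i) := by
    intro i s t hst
    obtain ⟨x0, hx0⟩ := hνpos i
    have hsum_s := hpisum (fun _ => s) i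
    have hsum_t := hpisum (fun _ => t) i
    simp only [hφ, pExp]
    refine Summable.tsum_lt_tsum (i := x0) ?_ ?_ hsum_s hsum_t
    · intro x
      have hns : (0:ℝ) ≤ (nuSharp ν x : ℝ) := Nat.cast_nonneg _
      have h1 : Real.exp (s * (nuSharp ν x : ℝ)) ≤ Real.exp (t * (nuSharp ν x : ℝ)) := by
        apply Real.exp_le_exp.mpr; nlinarith
      have h2 := hpLLnn x
      have h3 : (0:ℝ) ≤ (ν i x : ℝ) := Nat.cast_nonneg _
      exact mul_le_mul_of_nonneg_left (mul_le_mul_of_nonneg_left h1 h3) h2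
    · have hns : (1:ℝ) ≤ (nuSharp ν x0 : ℝ) := by exact_mod_cast hν x0
      have hexp : Real.exp (s * (nuSharp ν x0 : ℝ)) < Real.exp (t * (nuSharp ν x0 : ℝ)) := by
        apply Real.exp_lt_exp.mpr; nlinarith
      have h1 := hpLLpos x0
      have h2 : (0:ℝ) < (ν i x0 : ℝ) := by exact_mod_cast hx0
      exact mul_lt_mul_of_pos_left (mul_lt_mul_of_pos_left hexp h2) h1
  have hgd : ∀ (i : Fin n) (t : ℝ), HasDerivAt (g i) (K i - m * φ i t) t := by
    intro i t
    have h1 : HasDerivAt (fun u : ℝ => K i * u) (K i) t := by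
      simpa using (hasDerivAt_id t).const_mul (K i)
    have h2 := (hψd i t).const_mul m
    exact h1.sub h2
  have hgderiv : ∀ (i : Fin n) (t : ℝ), deriv (g i) t = K i - m * φ i t :=
    fun i t => (hgd i t).deriv
  have hganti : ∀ i : Fin n, StrictAnti (deriv (g i)) := by
    intro i a b hab
    rw [hgderiv, hgderiv]
    have h1 := hφmono i hab
    nlinarith
  have hgcont : ∀ i : Fin n, Continuous (g i) := by
    intro i
    have hd : Differentiable ℝ (g i) := fun t => (hgd i t).differentiableAt
    exact hd.continuous
  have hgconc : ∀ i : Fin n, StrictConcaveOn ℝ Set.univ (g i) := fun i =>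
    StrictAnti.strictConcaveOn_univ_of_deriv (hgcont i) (hganti i)
  -- splitting the pExp of the sum
  have hSψ : ∀ (t : ℝ) (i : Fin n), Summable fun x : X =>
      pLL p0 ν l x * (((ν i x : ℝ) / (nuSharp ν x : ℝ)) * Real.exp (t * (nuSharp ν x : ℝ))) := by
    intro t i
    refine Summable.of_nonneg_of_le (fun x => ?_) (fun x => ?_) (hpsum (fun _ => t))
    · exact mul_nonneg (hpLLnn x)
        (mul_nonneg (div_nonneg (Nat.cast_nonneg _) (Nat.cast_nonneg _)) (Real.exp_pos _).le)
    · refine mul_le_mul_of_nonneg_left ?_ (hpLLnn x)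
      exact Finset.single_le_sum (f := fun j =>
          ((ν j x : ℝ) / (nuSharp ν x : ℝ)) * Real.exp (t * (nuSharp ν x : ℝ)))
        (fun j _ => mul_nonneg (div_nonneg (Nat.cast_nonneg _) (Nat.cast_nonneg _))
          (Real.exp_pos _).le) (Finset.mem_univ i)
  have hPsplit : ∀ γ : Fin n → ℝ,
      pExp p0 ν l (fun x =>
          ∑ i, ((ν i x : ℝ) / (nuSharp ν x : ℝ)) * Real.exp (γ i * (nuSharp ν x : ℝ)))
        = ∑ i, ψ i (γ i) := by
    intro γ
    simp only [hψ, pExp]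
    rw [tsum_congr (fun x => Finset.mul_sum _ _ _)]
    exact Summable.tsum_finsetSum fun i _ => hSψ (γ i) i
  have hksplit : ∀ γ : Fin n → ℝ, ∀ y ∈ 𝒴,
      kExp Yf p0 ν l y (fun x => wdot γ ν x)
        = ∑ i, γ i * kExp Yf p0 ν l y (fun x => (ν i x : ℝ)) := by
    intro γ y hy
    simp only [kExp, wdot]
    calc ∑' x : {x : X // Yf x = y},
          (pLL p0 ν l x.1 / pLLY Yf p0 ν l y) * ∑ i, γ i * (ν i x.1 : ℝ)
        = ∑' x : {x : X // Yf x = y},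
            ∑ i, γ i * ((pLL p0 ν l x.1 / pLLY Yf p0 ν l y) * (ν i x.1 : ℝ)) := by
          refine tsum_congr fun x => ?_
          rw [Finset.mul_sum]
          exact Finset.sum_congr rfl fun i _ => by ring
      _ = ∑ i, ∑' x : {x : X // Yf x = y},
            γ i * ((pLL p0 ν l x.1 / pLLY Yf p0 ν l y) * (ν i x.1 : ℝ)) :=
          Summable.tsum_finsetSum fun i _ => ((hkisum i y hy).mul_left (γ i))
      _ = ∑ i, γ i * ∑' x : {x : X // Yf x = y},
            (pLL p0 ν l x.1 / pLLY Yf p0 ν l y) * (ν i x.1 : ℝ) :=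
          Finset.sum_congr rfl fun i _ => tsum_mul_left
  have hA : ∀ γ : Fin n → ℝ, Aaux Yf p0 ν 𝒴 γ l = m + ∑ i, g i (γ i) := by
    intro γ
    unfold Aaux
    rw [Multiset.map_congr rfl (fun y hy => by rw [hksplit γ y hy, hPsplit γ])]
    rw [show (fun y => 1 + (∑ i, γ i * kExp Yf p0 ν l y fun x => (ν i x : ℝ)) - ∑ i, ψ i (γ i))
        = fun y => (1 - ∑ i, ψ i (γ i)) +
            ∑ i, γ i * kExp Yf p0 ν l y fun x => (ν i x : ℝ) from
        funext fun y => by ring]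
    rw [Multiset.sum_map_add, Multiset.map_const', Multiset.sum_replicate,
      msum_fsum 𝒴 Finset.univ (fun i y => γ i * kExp Yf p0 ν l y fun x => (ν i x : ℝ))]
    simp only [Multiset.sum_map_mul_left, nsmul_eq_mul, hg, ← hK, ← hm]
    rw [Finset.sum_sub_distrib, ← Finset.mul_sum]
    have : ∑ i, γ i * K i = ∑ i, K i * γ i :=
      Finset.sum_congr rfl fun i _ => mul_comm _ _
    rw [this]; ring
  have hstat_iff : ∀ γh : Fin n → ℝ,
      (∀ i : Fin n,
        (𝒴.map fun y => kExp Yf p0 ν l y (fun x => (ν i x : ℝ))).sum =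
        (𝒴.map fun _ => pExp p0 ν l
          (fun x => (ν i x : ℝ) * Real.exp (γh i * (nuSharp ν x : ℝ)))).sum)
      ↔ (∀ i : Fin n, K i = m * φ i (γh i)) := by
    intro γh
    constructor <;> intro h i <;> have h2 := h i <;>
      · simp only [hK, hφ, Multiset.map_const', Multiset.sum_replicate, nsmul_eq_mul, ← hm]
          at h2 ⊢
        exact h2
  have hmax_iff : ∀ γh : Fin n → ℝ,
      (∀ γ : Fin n → ℝ, Aaux Yf p0 ν 𝒴 γ l ≤ Aaux Yf p0 ν 𝒴 γh l)
        ↔ ∀ i : Fin n, K i = m * φ i (γh i) := by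
    intro γh
    constructor
    · intro hmax i
      have hupd : ∀ t : ℝ, ∑ j, g j (Function.update γh i t j)
          = g i t + ∑ j ∈ Finset.univ.erase i, g j (γh j) := by
        intro t
        rw [← Finset.add_sum_erase _ _ (Finset.mem_univ i), Function.update_self]
        congr 1
        exact Finset.sum_congr rfl fun j hj => by
          rw [Function.update_of_ne (Finset.ne_of_mem_erase hj)]
      have h1 : ∀ t : ℝ, g i t ≤ g i (γh i) := by
        intro t
        have h2 := hmax (Function.update γh i t)
        rw [hA, hA, hupd t] at h2
        have h4 := hupd (γh i)
        rw [Function.update_eq_self] at h4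
        rw [h4] at h2
        linarith
      have hloc : IsLocalMax (g i) (γh i) := Filter.Eventually.of_forall h1
      have hz := hloc.hasDerivAt_eq_zero (hgd i (γh i))
      linarith
    · intro hst γ
      rw [hA, hA]
      have hle : ∀ i : Fin n, g i (γ i) ≤ g i (γh i) := by
        intro i
        rcases lt_trichotomy (γ i) (γh i) with hlt | heq | hgt
        · have hmono : StrictMonoOn (g i) (Set.Iic (γh i)) := by
            apply strictMonoOn_of_deriv_pos (convex_Iic _) (hgcont i).continuousOn
            intro x hx
            rw [interior_Iic] at hx
            rw [hgderiv]
            have h5 := mul_lt_mul_of_pos_left (hφmono i hx) hmpos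
            have h0 := hst i
            linarith
          exact (hmono (Set.mem_Iic.mpr hlt.le) (Set.mem_Iic.mpr le_rfl) hlt).le
        · rw [heq]
        · have hanti : StrictAntiOn (g i) (Set.Ici (γh i)) := by
            apply strictAntiOn_of_deriv_neg (convex_Ici _) (hgcont i).continuousOn
            intro x hx
            rw [interior_Ici] at hx
            rw [hgderiv]
            have h5 := mul_lt_mul_of_pos_left (hφmono i hx) hmpos
            have h0 := hst i
            linarith
          exact (hanti (Set.mem_Ici.mpr le_rfl) (Set.mem_Ici.mpr hgt.le) hgt).le
      have hss : ∑ i, g i (γ i) ≤ ∑ i, g i (γh i) := Finset.sum_le_sum fun i _ => hle i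
      linarith
  have hconc : StrictConcaveOn ℝ (Set.univ : Set (Fin n → ℝ))
      (fun γ => Aaux Yf p0 ν 𝒴 γ l) := by
    rw [show (fun γ : Fin n → ℝ => Aaux Yf p0 ν 𝒴 γ l) = fun γ => m + ∑ i, g i (γ i) from
      funext hA]
    refine ⟨convex_univ, ?_⟩
    intro x _ y _ hxy a b ha hb hab
    obtain ⟨j, hj⟩ := Function.ne_iff.mp hxy
    have hxy' : a • x + b • y = fun i => a * x i + b * y i := by
      funext i; simp [smul_eq_mul]
    rw [hxy']
    have key : ∑ i, (a * g i (x i) + b * g i (y i)) < ∑ i, g i (a * x i + b * y i) := by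
      refine Finset.sum_lt_sum (fun i _ => ?_) ⟨j, Finset.mem_univ j, ?_⟩
      · exact (hgconc i).concaveOn.2 (Set.mem_univ _) (Set.mem_univ _) ha.le hb.le hab
      · exact (hgconc j).2 (Set.mem_univ _) (Set.mem_univ _) hj ha hb hab
    rw [Finset.sum_add_distrib, ← Finset.mul_sum, ← Finset.mul_sum] at key
    have hm1 : a * m + b * m = m := by rw [← add_mul, hab, one_mul]
    simp only [smul_eq_mul]
    nlinarith [key]
  refine ⟨hconc, fun γh => (hmax_iff γh).trans (hstat_iff γh).symm, ?_⟩
  intro γ₁ γ₂ h1 h2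
  have e1 := (hmax_iff γ₁).mp h1
  have e2 := (hmax_iff γ₂).mp h2
  funext i
  have heq : φ i (γ₁ i) = φ i (γ₂ i) :=
    mul_left_cancel₀ (ne_of_gt hmpos) ((e1 i).symm.trans (e2 i))
  exact (hφmono i).injective heq
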